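/- Let n ≥ 1, d ≥ 0, 0 ≤ s ≤ n+1 be integers and let m_1,…,m_s be integers with 0 ≤ m_i ≤ d+1 for all i. Assume the corresponding toric divisor is non-effective, i.e. Σ_{i=1}^s m_i > nd or m_i = d+1 for some i. Then ℓ(n,d; m_1,…,m_s) = 0; that is, Σ_{I ⊆ {1,…,s}} (−1)^{|I|} · binom(n + k_I − |I|, n) = 0. (This is the identity ldim(D) = 0 for non-effective toric divisors with multiplicities bounded by d+1.) -/

import Mathlib

open MvPolynomial Finset

noncomputable section

/-- The homogeneous vanishing ideal of the point of `ℙ^{N-1}` represented by the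
vector `v`: the ideal generated by the linear forms vanishing at `v`. -/
def pointIdeal (k : Type) [Field k] (N : ℕ) (v : Fin N → k) :
    Ideal (MvPolynomial (Fin N) k) :=
  Ideal.span {P | P ∈ homogeneousSubmodule (Fin N) k 1 ∧ eval v P = 0}

/-- The homogeneous vanishing ideal `(x_j : j ≠ i)` of the `i`-th coordinate point. -/
def coordIdeal (k : Type) [Field k] (N : ℕ) (i : ℕ) :
    Ideal (MvPolynomial (Fin N) k) :=
  Ideal.span {P | ∃ j : Fin N, (j : ℕ) ≠ i ∧ P = X j}

/-- The linear system `L_{n,d}(m_1,…,m_s; p_1,…,p_s)` of degree-`d` forms in `n+1`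
variables with multiplicity at least `m i` at the point `p i`, for `i < s`. -/
def linSys (k : Type) [Field k] (n d s : ℕ) (m : ℕ → ℕ)
    (p : ℕ → (Fin (n + 1) → k)) : Submodule k (MvPolynomial (Fin (n + 1)) k) :=
  (homogeneousSubmodule (Fin (n + 1)) k d) ⊓
    ⨅ i ∈ Finset.range s,
      Submodule.restrictScalars k (pointIdeal k (n + 1) (p i) ^ (m i))

/-- The generic dimension of `L_{n,d}(m_1,…,m_s)`: the minimum over all `s`-tuples of
points of `ℙ^n(k)` of the dimension of the corresponding linear system. -/
def gdim (k : Type) [Field k] (n d s : ℕ) (m : ℕ → ℕ) : ℕ :=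
  sInf {N | ∃ p : ℕ → (Fin (n + 1) → k),
    (∀ i < s, p i ≠ 0) ∧ N = Module.finrank k ↥(linSys k n d s m p)}

/-- `k_I = max(Σ_{i∈I} m_i − (|I|−1)d, 0)`. -/
def kIdx (d : ℕ) (m : ℕ → ℕ) (I : Finset ℕ) : ℤ :=
  max ((∑ i ∈ I, (m i : ℤ)) - ((I.card : ℤ) - 1) * d) 0

/-- `binom(a, n)`, understood to be `0` whenever `a < n` (in particular for negative `a`). -/
def binomZ (a : ℤ) (n : ℕ) : ℤ :=
  if a < (n : ℤ) then 0 else ((a.toNat).choose n : ℤ)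

/-- The (affine) linear virtual dimension
`ℓ(n,d;m_1,…,m_s) = Σ_{I ⊆ {1,…,s}} (−1)^{|I|} binom(n + k_I − |I|, n)`. -/
def ldim (n d s : ℕ) (m : ℕ → ℕ) : ℤ :=
  ∑ I ∈ (Finset.range s).powerset,
    (-1) ^ I.card * binomZ ((n : ℤ) + kIdx d m I - (I.card : ℤ)) n

namespace Stmt7Aux


lemma antidiagonalTuple_succ_eq (k e : ℕ) :
    Finset.Nat.antidiagonalTuple (k + 1) e =
      (Finset.range (e + 1)).biUnion
        (fun j => (Finset.Nat.antidiagonalTuple k (e - j)).image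
          (@Fin.cons k (fun _ => ℕ) j)) := by
  ext x
  simp only [Finset.Nat.mem_antidiagonalTuple, Finset.mem_biUnion, Finset.mem_range,
    Finset.mem_image]
  constructor
  · intro hx
    rw [Fin.sum_univ_succ] at hx
    refine ⟨x 0, by omega, Fin.tail x, ?_, Fin.cons_self_tail x⟩
    have : ∑ i : Fin k, Fin.tail x i = ∑ i : Fin k, x i.succ := rfl
    omega
  · rintro ⟨j, hj, y, hy, rfl⟩
    rw [Fin.sum_univ_succ]
    simp only [Fin.cons_zero, Fin.cons_succ]
    omega

lemma card_antidiagonalTuple : ∀ k e : ℕ,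
    (Finset.Nat.antidiagonalTuple (k + 1) e).card = (e + k).choose k
  | 0, e => by simp
  | (k + 1), e => by
    rw [antidiagonalTuple_succ_eq]
    rw [Finset.card_biUnion]
    · have hstep : ∀ j ∈ Finset.range (e + 1),
          ((Finset.Nat.antidiagonalTuple (k + 1) (e - j)).image
            (@Fin.cons (k + 1) (fun _ => ℕ) j)).card
            = ((e - j) + k).choose k := fun j _ => by
        rw [Finset.card_image_of_injective _
          (Fin.cons_right_injective (α := fun _ : Fin (k + 2) => ℕ) j),
          card_antidiagonalTuple k]
      rw [Finset.sum_congr rfl hstep]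
      have hrefl := Finset.sum_range_reflect (fun j => (j + k).choose k) (e + 1)
      simp only [Nat.add_sub_cancel] at hrefl
      rw [hrefl, Nat.sum_range_add_choose e k, ← Nat.add_assoc]
    · intro i _ j _ hij
      rw [Function.onFun, Finset.disjoint_left]
      rintro x hx1 hx2
      simp only [Finset.mem_image] at hx1 hx2
      obtain ⟨y, _, rfl⟩ := hx1
      obtain ⟨z, _, hz⟩ := hx2
      apply hij
      have := congrFun hz 0
      simpa using this.symm

lemma card_filter_shift (N e : ℕ) (w : Fin N → ℕ) :
    ((Finset.Nat.antidiagonalTuple N e).filter (fun a => ∀ j, w j ≤ a j)).card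
      = if (∑ j, w j) ≤ e then (Finset.Nat.antidiagonalTuple N (e - ∑ j, w j)).card
        else 0 := by
  split_ifs with h
  · refine Finset.card_nbij' (fun a => fun j => a j - w j)
      (fun b => fun j => b j + w j) ?_ ?_ ?_ ?_
    · intro a ha
      rw [Finset.mem_coe, Finset.mem_filter, Finset.Nat.mem_antidiagonalTuple] at ha
      simp only [Finset.mem_coe, Finset.Nat.mem_antidiagonalTuple]
      rw [Finset.sum_tsub_distrib _ (fun j _ => ha.2 j), ha.1]
    · intro b hb
      rw [Finset.mem_coe, Finset.Nat.mem_antidiagonalTuple] at hb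
      simp only [Finset.mem_coe, Finset.mem_filter, Finset.Nat.mem_antidiagonalTuple]
      constructor
      · rw [Finset.sum_add_distrib, hb]
        omega
      · intro j; exact Nat.le_add_left _ _
    · intro a ha
      rw [Finset.mem_coe, Finset.mem_filter] at ha
      funext j
      have := ha.2 j
      dsimp only
      omega
    · intro b _
      funext j
      dsimp only
      omega
  · rw [Finset.card_eq_zero, Finset.filter_eq_empty_iff]
    intro a ha hcon
    rw [Finset.Nat.mem_antidiagonalTuple] at ha
    exact h (ha ▸ Finset.sum_le_sum (fun j _ => hcon j))

def emb (n : ℕ) : ℕ → Fin (n + 1) := fun i => ⟨min i n, Nat.lt_succ_of_le (min_le_right i n)⟩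

lemma emb_coe {n : ℕ} {i : ℕ} (hi : i ≤ n) : ((emb n i : Fin (n + 1)) : ℕ) = i := by
  simp [emb, Nat.min_eq_left hi]

lemma emb_self {n : ℕ} (j : Fin (n + 1)) : emb n (j : ℕ) = j :=
  Fin.ext (by simpa [emb] using Nat.min_eq_left (Nat.le_of_lt_succ j.isLt))

lemma key_count (n d s : ℕ) (hs : s ≤ n + 1) (m : ℕ → ℕ) (hm : ∀ i < s, m i ≤ d + 1)
    (I : Finset ℕ) (hI : I ⊆ Finset.range s) :
    binomZ ((n : ℤ) + kIdx d m I - (I.card : ℤ)) n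
      = (((Finset.Nat.antidiagonalTuple (n + 1) d).filter
          (fun a => ∀ j : Fin (n + 1),
            (if (j : ℕ) ∈ I then d + 1 - m (j : ℕ) else 0) ≤ a j)).card : ℤ) := by
  classical
  rw [card_filter_shift (n + 1) d (fun j : Fin (n + 1) =>
    if (j : ℕ) ∈ I then d + 1 - m (j : ℕ) else 0)]
  have hIn : I ⊆ Finset.range (n + 1) := hI.trans (Finset.range_subset_range.mpr hs)
  have hmI : ∀ i ∈ I, m i ≤ d + 1 := fun i hi => hm i (Finset.mem_range.mp (hI hi))
  have hwsum : (∑ j : Fin (n + 1), if (j : ℕ) ∈ I then d + 1 - m (j : ℕ) else 0)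
      = ∑ i ∈ I, (d + 1 - m i) := by
    rw [Fin.sum_univ_eq_sum_range (fun i => if i ∈ I then d + 1 - m i else 0) (n + 1),
      Finset.sum_ite_mem, Finset.inter_eq_right.mpr hIn]
  rw [hwsum]
  set Sz := ∑ i ∈ I, (m i : ℤ) with hSz
  set c := ∑ i ∈ I, (d + 1 - m i) with hcdef
  have hc : (c : ℤ) = (I.card : ℤ) * (d + 1) - Sz := by
    rw [hcdef, Nat.cast_sum]
    rw [Finset.sum_congr rfl (fun i hi =>
      show ((d + 1 - m i : ℕ) : ℤ) = (d : ℤ) + 1 - (m i : ℤ) by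
        have := hmI i hi; omega)]
    rw [Finset.sum_sub_distrib, Finset.sum_const, nsmul_eq_mul, hSz]
  split_ifs with hle
  · rw [card_antidiagonalTuple]
    have hcd : (c : ℤ) ≤ (d : ℤ) := by exact_mod_cast hle
    have hk : kIdx d m I = Sz - ((I.card : ℤ) - 1) * d := by
      rw [kIdx, ← hSz]
      apply max_eq_left
      nlinarith [hc, hcd, Nat.cast_nonneg (α := ℤ) I.card, Nat.cast_nonneg (α := ℤ) d]
    have harg : (n : ℤ) + (Sz - ((I.card : ℤ) - 1) * d) - (I.card : ℤ)
        = (((d - c) + n : ℕ) : ℤ) := by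
      have h1 : ((d - c : ℕ) : ℤ) = (d : ℤ) - (c : ℤ) := by omega
      rw [Nat.cast_add, h1]
      linear_combination hc
    have hargn : ¬ ((n : ℤ) + (Sz - ((I.card : ℤ) - 1) * d) - (I.card : ℤ) < (n : ℤ)) := by
      rw [harg]; push_cast; omega
    rw [hk, binomZ, if_neg hargn, harg, Int.toNat_natCast]
  · have hdc : (d : ℤ) < (c : ℤ) := by exact_mod_cast (by omega : d < c)
    have hne : I.Nonempty := by
      rcases I.eq_empty_or_nonempty with rfl | h
      · simp [hcdef] at hle
      · exact h
    have ht : (1 : ℤ) ≤ (I.card : ℤ) := by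
      exact_mod_cast Finset.card_pos.mpr hne
    rw [binomZ, if_pos, Nat.cast_zero]
    rw [kIdx, ← hSz]
    have h1 : Sz - ((I.card : ℤ) - 1) * (d : ℤ) < (I.card : ℤ) := by nlinarith [hc, hdc]
    have h2 : (0 : ℤ) < (I.card : ℤ) := by linarith
    have := max_lt h1 h2
    linarith

end Stmt7Aux

/-- for `s ≤ n+1`, `m_i ≤ d+1`, if the toric divisor is non-effective
(the sum of multiplicities exceeds `nd`, or some `m_i = d+1`), then the linear
virtual dimension is `0`. -/
theorem stmt7 (n d s : ℕ) (hn : 1 ≤ n) (hs : s ≤ n + 1)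
    (m : ℕ → ℕ) (hm : ∀ i < s, m i ≤ d + 1)
    (hne : (n * d < ∑ i ∈ Finset.range s, m i) ∨ ∃ i < s, m i = d + 1) :
    ldim n d s m = 0 := by
  classical
  set T := Finset.Nat.antidiagonalTuple (n + 1) d with hT
  set B : (Fin (n + 1) → ℕ) → Finset ℕ :=
    fun a => (Finset.range s).filter (fun i => d + 1 - m i ≤ a (Stmt7Aux.emb n i)) with hB
  rw [ldim]
  have step1 : ∑ I ∈ (Finset.range s).powerset,
      (-1 : ℤ) ^ I.card * binomZ ((n : ℤ) + kIdx d m I - (I.card : ℤ)) n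
      = ∑ I ∈ (Finset.range s).powerset, ∑ a ∈ T,
          (if (∀ j : Fin (n + 1), (if (j : ℕ) ∈ I then d + 1 - m (j : ℕ) else 0) ≤ a j)
            then (-1 : ℤ) ^ I.card else 0) := by
    refine Finset.sum_congr rfl fun I hI => ?_
    rw [Stmt7Aux.key_count n d s hs m hm I (Finset.mem_powerset.mp hI)]
    rw [Finset.card_filter, Nat.cast_sum, Finset.mul_sum]
    refine Finset.sum_congr rfl fun a _ => ?_
    split_ifs <;> simp
  rw [step1, Finset.sum_comm]
  apply Finset.sum_eq_zero
  intro a ha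
  have hPiff : ∀ I ∈ (Finset.range s).powerset,
      ((∀ j : Fin (n + 1), (if (j : ℕ) ∈ I then d + 1 - m (j : ℕ) else 0) ≤ a j)
        ↔ I ∈ (B a).powerset) := by
    intro I hI
    rw [Finset.mem_powerset] at hI ⊢
    constructor
    · intro h i hi
      simp only [hB, Finset.mem_filter]
      refine ⟨hI hi, ?_⟩
      have hj := h (Stmt7Aux.emb n i)
      have hin : i ≤ n :=
        Nat.lt_succ_iff.mp (lt_of_lt_of_le (Finset.mem_range.mp (hI hi)) hs)
      rw [Stmt7Aux.emb_coe hin, if_pos hi] at hj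
      exact hj
    · intro h j
      by_cases hj : (j : ℕ) ∈ I
      · rw [if_pos hj]
        have h2 := (Finset.mem_filter.mp (h hj)).2
        rwa [Stmt7Aux.emb_self j] at h2
      · rw [if_neg hj]; exact Nat.zero_le _
  rw [Finset.sum_congr rfl (fun I hI => if_congr (hPiff I hI) rfl rfl)]
  rw [Finset.sum_ite_mem, Finset.inter_eq_right.mpr
    (Finset.powerset_mono.mpr (Finset.filter_subset _ _))]
  rw [Finset.sum_powerset_neg_one_pow_card]
  rw [if_neg]
  clear step1 hPiff
  intro hempty
  rw [Finset.filter_eq_empty_iff] at hempty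
  rcases hne with hlt | ⟨i, his, hmi⟩
  · have hsumT : ∑ j : Fin (n + 1), a j = d := Finset.Nat.mem_antidiagonalTuple.mp ha
    have hsum' : ∑ i ∈ Finset.range (n + 1), a (Stmt7Aux.emb n i) = d := by
      rw [← Fin.sum_univ_eq_sum_range (fun i => a (Stmt7Aux.emb n i)) (n + 1)]
      exact (Finset.sum_congr rfl fun j _ =>
        congrArg a (Stmt7Aux.emb_self j)).trans hsumT
    have hA : ∑ i ∈ Finset.range s, (a (Stmt7Aux.emb n i) + m i)
        ≤ ∑ _i ∈ Finset.range s, d :=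
      Finset.sum_le_sum (fun i hi => by
        have h1 := hempty hi
        have h2 := hm i (Finset.mem_range.mp hi)
        omega)
    rw [Finset.sum_add_distrib, Finset.sum_const, Finset.card_range, smul_eq_mul] at hA
    have hsplit : ∑ i ∈ Finset.range s, a (Stmt7Aux.emb n i)
        + ∑ i ∈ Finset.Ico s (n + 1), a (Stmt7Aux.emb n i) = d := by
      rw [Finset.range_eq_Ico, Finset.sum_Ico_consecutive _ (Nat.zero_le s) hs,
        ← Finset.range_eq_Ico, hsum']
    have hR : ∑ i ∈ Finset.Ico s (n + 1), a (Stmt7Aux.emb n i)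
        ≤ ∑ _i ∈ Finset.Ico s (n + 1), d :=
      Finset.sum_le_sum (fun i _ => by
        have h3 : a (Stmt7Aux.emb n i) ≤ ∑ j : Fin (n + 1), a j :=
          Finset.single_le_sum (fun j _ => Nat.zero_le _) (Finset.mem_univ _)
        omega)
    rw [Finset.sum_const, Nat.card_Ico, smul_eq_mul] at hR
    have hmul : s * d + (n + 1 - s) * d = n * d + d := by
      have h3 : s + (n + 1 - s) = n + 1 := by omega
      calc s * d + (n + 1 - s) * d = (s + (n + 1 - s)) * d := (Nat.add_mul _ _ _).symm
        _ = (n + 1) * d := by rw [h3]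
        _ = n * d + d := by ring
    omega
  · exact (hempty (Finset.mem_range.mpr his)) (by rw [hmi]; omega)
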